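/- arXiv:1604.06304 — 3 statements merged into one kernel-verified Lean document; each statement's English description precedes it below -/
import Mathlib

section
/- Let g, h be probability densities on △ with ‖log(g/h)‖_∞ < ∞. Then for any constant κ ∈ ℝ, KL(g‖h) ≤ (1/2) exp(‖log(g/h) - κ‖_∞) ∫_△ g (log(g/h) - κ)^2. -/
open MeasureTheory Real

def simplexD (d : ℕ) : Set (Fin d → ℝ) :=
  {x | (∀ i, x i ∈ Set.Icc (0:ℝ) 1) ∧ ∀ i j : Fin d, i ≤ j → x i ≤ x j}

noncomputable def qMeas (d i : ℕ) : Measure ℝ :=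
  volume.withDensity (fun t => ENNReal.ofReal
    (Set.indicator (Set.Icc (0:ℝ) 1)
      (fun s => (1-s)^(d-i) * s^(i-1) / ((d-i).factorial * (i-1).factorial)) t))

lemma exp_quad_bound (M t : ℝ) (ht : |t| ≤ M) :
    Real.exp t ≤ 1 + t + Real.exp M / 2 * t ^ 2 := by
  have hM0 : 0 ≤ M := le_trans (abs_nonneg t) ht
  have hexpM : (1:ℝ) ≤ Real.exp M := Real.one_le_exp hM0
  rcases le_or_gt 0 t with h0 | h0
  · have hI : ∫ s in (0:ℝ)..t, (Real.exp s - 1) = Real.exp t - 1 - t := by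
      rw [intervalIntegral.integral_sub (Real.continuous_exp.intervalIntegrable 0 t)
        intervalIntegrable_const]
      simp [integral_exp]
    have hI2 : ∫ s in (0:ℝ)..t, Real.exp M * s = Real.exp M * (t^2/2) := by
      rw [intervalIntegral.integral_const_mul, integral_id]
      ring
    have hmono : ∫ s in (0:ℝ)..t, (Real.exp s - 1) ≤ ∫ s in (0:ℝ)..t, Real.exp M * s := by
      apply intervalIntegral.integral_mono_on h0
        ((Real.continuous_exp.sub continuous_const).intervalIntegrable 0 t)
        ((continuous_const.mul continuous_id).intervalIntegrable 0 t)
      intro s hs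
      simp only [id_eq, Pi.sub_apply, Pi.mul_apply]
      have h1 : Real.exp s * (1 - s) ≤ 1 := by
        have := Real.add_one_le_exp (-s)
        calc Real.exp s * (1 - s) ≤ Real.exp s * Real.exp (-s) := by
              apply mul_le_mul_of_nonneg_left (by linarith) (Real.exp_pos s).le
          _ = 1 := by rw [← Real.exp_add]; simp
      have h2 : Real.exp s ≤ Real.exp M := Real.exp_le_exp.2 (hs.2.trans (le_trans (le_abs_self t) ht))
      nlinarith [hs.1, Real.exp_pos s, mul_le_mul_of_nonneg_left h2 hs.1]
    nlinarith [hI ▸ hI2 ▸ hmono]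
  · have hI : ∫ s in t..(0:ℝ), ((1:ℝ) - Real.exp s) = Real.exp t - 1 - t := by
      rw [intervalIntegral.integral_sub intervalIntegrable_const
        (Real.continuous_exp.intervalIntegrable t 0)]
      simp [integral_exp]
      ring
    have hI2 : ∫ s in t..(0:ℝ), Real.exp M * (-s) = Real.exp M * (t^2/2) := by
      rw [intervalIntegral.integral_const_mul]
      have : ∫ s in t..(0:ℝ), (-s) = - ∫ s in t..(0:ℝ), s := intervalIntegral.integral_neg
      rw [this, integral_id]
      ring
    have hmono : ∫ s in t..(0:ℝ), ((1:ℝ) - Real.exp s) ≤ ∫ s in t..(0:ℝ), Real.exp M * (-s) := by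
      apply intervalIntegral.integral_mono_on h0.le
        ((continuous_const.sub Real.continuous_exp).intervalIntegrable t 0)
        ((continuous_const.mul continuous_neg).intervalIntegrable t 0)
      intro s hs
      have h1 : 1 - Real.exp s ≤ -s := by have := Real.add_one_le_exp s; linarith
      have h2 : 0 ≤ -s := by linarith [hs.2]
      simp only [Pi.sub_apply, Pi.mul_apply]
      nlinarith
    nlinarith [hI ▸ hI2 ▸ hmono]

lemma simplexD_meas (d : ℕ) : MeasurableSet (simplexD d) := by
  have : simplexD d = (⋂ i, {x : Fin d → ℝ | x i ∈ Set.Icc (0:ℝ) 1}) ∩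
      ⋂ i, ⋂ j, ⋂ (_ : i ≤ j), {x : Fin d → ℝ | x i ≤ x j} := by
    ext x; simp [simplexD]
  rw [this]
  apply MeasurableSet.inter
  · exact MeasurableSet.iInter fun i => (measurable_pi_apply i) measurableSet_Icc
  · exact MeasurableSet.iInter fun i => MeasurableSet.iInter fun j =>
      MeasurableSet.iInter fun _ => measurableSet_le (measurable_pi_apply i) (measurable_pi_apply j)

lemma simplexD_nonempty (d : ℕ) : ((fun _ => 0 : Fin d → ℝ)) ∈ simplexD d := by
  constructor
  · intro i; exact ⟨le_refl 0, zero_le_one⟩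
  · intro i j _; exact le_refl 0

/-- Lemma: upper bound on Kullback-Leibler divergence. -/
theorem statement2 (d : ℕ) (hd : 2 ≤ d) (g h : (Fin d → ℝ) → ℝ)
    (hgm : Measurable g) (hhm : Measurable h)
    (hgpos : ∀ x ∈ simplexD d, 0 < g x) (hhpos : ∀ x ∈ simplexD d, 0 < h x)
    (hg1 : ∫ x in simplexD d, g x = 1) (hh1 : ∫ x in simplexD d, h x = 1)
    (B : ℝ) (hB : ∀ x ∈ simplexD d, |Real.log (g x / h x)| ≤ B)
    (κ M : ℝ) (hM : ∀ x ∈ simplexD d, |Real.log (g x / h x) - κ| ≤ M) :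
    ∫ x in simplexD d, g x * Real.log (g x / h x)
      ≤ (1/2) * Real.exp M * ∫ x in simplexD d, g x * (Real.log (g x / h x) - κ)^2 := by
  set S := simplexD d with hS
  have hSm : MeasurableSet S := simplexD_meas d
  set u : (Fin d → ℝ) → ℝ := fun x => Real.log (g x / h x) - κ with hu
  have hum : Measurable u := ((hgm.div hhm).log).sub_const κ
  have hM0 : 0 ≤ M := le_trans (abs_nonneg _) (hM _ (simplexD_nonempty d))
  -- integrability of g and h
  have hgint : IntegrableOn g S := by
    by_contra hc
    rw [MeasureTheory.integral_undef hc] at hg1; norm_num at hg1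
  have hhint : IntegrableOn h S := by
    by_contra hc
    rw [MeasureTheory.integral_undef hc] at hh1; norm_num at hh1
  -- integrability of g * u
  have hgu : IntegrableOn (fun x => g x * u x) S := by
    apply Integrable.mono' (hgint.abs.const_mul M)
      (hgm.mul hum).aestronglyMeasurable
    rw [ae_restrict_iff' hSm]
    filter_upwards with x hx
    rw [Pi.mul_apply, norm_mul]
    calc ‖g x‖ * ‖u x‖ ≤ ‖g x‖ * M := by
          apply mul_le_mul_of_nonneg_left (hM x hx) (norm_nonneg _)
      _ = M * |g x| := by rw [Real.norm_eq_abs]; ring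
  -- integrability of g * u^2
  have hgu2 : IntegrableOn (fun x => g x * u x ^ 2) S := by
    apply Integrable.mono' (hgint.abs.const_mul (M^2))
      (hgm.mul (hum.pow_const 2)).aestronglyMeasurable
    rw [ae_restrict_iff' hSm]
    filter_upwards with x hx
    rw [Pi.mul_apply, norm_mul]
    calc ‖g x‖ * ‖u x ^ 2‖ ≤ ‖g x‖ * M ^ 2 := by
          apply mul_le_mul_of_nonneg_left ?_ (norm_nonneg _)
          rw [Real.norm_eq_abs, abs_pow]
          exact pow_le_pow_left₀ (abs_nonneg _) (hM x hx) 2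
      _ = M ^ 2 * |g x| := by rw [Real.norm_eq_abs]; ring
  -- g * exp(-u) = exp κ * h on S
  have hEq : Set.EqOn (fun x => g x * Real.exp (-(u x))) (fun x => Real.exp κ * h x) S := by
    intro x hx
    have hg0 := hgpos x hx
    have hh0 := hhpos x hx
    have : Real.exp (-(u x)) = Real.exp κ * (h x / g x) := by
      rw [hu]
      simp only [neg_sub]
      rw [Real.exp_sub, Real.exp_log (div_pos hg0 hh0)]
      field_simp
    simp only [this]
    field_simp
  have hgeint : IntegrableOn (fun x => g x * Real.exp (-(u x))) S := by
    exact IntegrableOn.congr_fun (hhint.const_mul (Real.exp κ)) hEq.symm hSm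
  have E1 : ∫ x in S, g x * Real.exp (-(u x)) = Real.exp κ := by
    rw [setIntegral_congr_fun hSm hEq, MeasureTheory.integral_const_mul, hh1, mul_one]
  have haux : IntegrableOn (fun x => g x * (1 - u x)) S := by
    apply IntegrableOn.congr_fun (hgint.sub hgu) ?_ hSm
    intro x _; simp; ring
  have E2 : ∫ x in S, g x * Real.exp (-(u x))
      ≤ ∫ x in S, (g x * (1 - u x) + Real.exp M / 2 * (g x * u x ^ 2)) := by
    apply setIntegral_mono_on hgeint ?_ hSm
    · intro x hx
      have hg0 := (hgpos x hx).le
      have key : Real.exp (-(u x)) ≤ 1 + (-(u x)) + Real.exp M / 2 * (-(u x)) ^ 2 :=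
        exp_quad_bound M (-(u x)) (by rw [abs_neg]; exact hM x hx)
      have := mul_le_mul_of_nonneg_left key hg0
      nlinarith [this]
    · exact (haux.add (hgu2.const_mul (Real.exp M / 2)))
  have E3 : ∫ x in S, (g x * (1 - u x) + Real.exp M / 2 * (g x * u x ^ 2))
      = 1 - (∫ x in S, g x * u x) + Real.exp M / 2 * ∫ x in S, g x * u x ^ 2 := by
    rw [MeasureTheory.integral_add haux (hgu2.const_mul _)]
    rw [MeasureTheory.integral_const_mul]
    congr 1
    have : ∫ x in S, g x * (1 - u x) = ∫ x in S, (g x - g x * u x) := by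
      apply setIntegral_congr_fun hSm; intro x _; ring
    rw [this, MeasureTheory.integral_sub hgint hgu, hg1]
  have E4 : ∫ x in S, g x * Real.log (g x / h x) = (∫ x in S, g x * u x) + κ := by
    have : ∫ x in S, g x * Real.log (g x / h x) = ∫ x in S, (g x * u x + κ * g x) := by
      apply setIntegral_congr_fun hSm; intro x _; rw [hu]; ring
    rw [this, MeasureTheory.integral_add hgu (hgint.const_mul κ),
      MeasureTheory.integral_const_mul, hg1, mul_one]
  have E5 : κ + 1 ≤ Real.exp κ := Real.add_one_le_exp κ
  rw [E4]
  rw [E1, E3] at E2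
  linarith [E2, E5]
end

section
/- The inverse of the matrix R_k is the symmetric tridiagonal matrix with diagonal entries D_i = ((k+d-1)(k+1) + 2(i-1)(d-i))/(k(k+d)) for 1 ≤ i ≤ d, and off-diagonal entries Q_i = -√(i(d-i)(k+i)(k+d-i))/(k(k+d)) for 1 ≤ i ≤ d-1. -/
open MeasureTheory Real

noncomputable def uu (d k m : ℕ) : ℝ :=
  Real.sqrt (((d-1-m).factorial * (k+m).factorial : ℕ)) /
  Real.sqrt ((m.factorial * (k+d-1-m).factorial : ℕ))

lemma facpos (a b : ℕ) : 0 < a.factorial * b.factorial :=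
  Nat.mul_pos (Nat.factorial_pos _) (Nat.factorial_pos _)

lemma fac_cast_pos (a b : ℕ) : (0:ℝ) < ((a.factorial * b.factorial : ℕ) : ℝ) := by
  exact_mod_cast facpos a b

lemma uu_pos (d k m : ℕ) : 0 < uu d k m := by
  unfold uu
  exact div_pos (Real.sqrt_pos.mpr (fac_cast_pos _ _)) (Real.sqrt_pos.mpr (fac_cast_pos _ _))

lemma key (P A B A' B' N : ℕ) (hB : 0 < B) (hB' : 0 < B')
    (h : P * A * B' = N^2 * A' * B) :
    Real.sqrt P * (Real.sqrt A / Real.sqrt B) = N * (Real.sqrt A' / Real.sqrt B') := by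
  have hBr : (0:ℝ) < (B:ℝ) := by exact_mod_cast hB
  have hB'r : (0:ℝ) < (B':ℝ) := by exact_mod_cast hB'
  refine (sq_eq_sq₀ (by positivity) (by positivity)).mp ?_
  simp only [mul_pow, div_pow]
  rw [Real.sq_sqrt (by positivity), Real.sq_sqrt (by positivity), Real.sq_sqrt (by positivity),
    Real.sq_sqrt (by positivity), Real.sq_sqrt (by positivity)]
  have h' : ((P * A * B' : ℕ) : ℝ) = ((N^2 * A' * B : ℕ) : ℝ) := by exact_mod_cast h
  push_cast at h'
  field_simp
  linear_combination h'

lemma sqrt_frac_mul (X Y Z W A B A' B' : ℕ) (hY : 0 < Y) (hW : 0 < W) (hB : 0 < B) (hA' : 0 < A')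
    (hA : 0 < A) (hB' : 0 < B')
    (h : X*Z*(B*A') = (A*B')*(Y*W)) :
    Real.sqrt ((X:ℝ)/(Y:ℝ)) * Real.sqrt ((Z:ℝ)/(W:ℝ)) =
      (Real.sqrt A / Real.sqrt B) / (Real.sqrt A' / Real.sqrt B') := by
  have hYr : (0:ℝ) < (Y:ℝ) := by exact_mod_cast hY
  have hWr : (0:ℝ) < (W:ℝ) := by exact_mod_cast hW
  have hBr : (0:ℝ) < (B:ℝ) := by exact_mod_cast hB
  have hA'r : (0:ℝ) < (A':ℝ) := by exact_mod_cast hA'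
  have hAr : (0:ℝ) < (A:ℝ) := by exact_mod_cast hA
  have hB'r : (0:ℝ) < (B':ℝ) := by exact_mod_cast hB'
  have h1 : (0:ℝ) < Real.sqrt B := Real.sqrt_pos.mpr hBr
  have h2 : (0:ℝ) < Real.sqrt A' := Real.sqrt_pos.mpr hA'r
  refine (sq_eq_sq₀ (by positivity) (by positivity)).mp ?_
  simp only [mul_pow, div_pow]
  rw [Real.sq_sqrt (by positivity), Real.sq_sqrt (by positivity), Real.sq_sqrt (by positivity),
    Real.sq_sqrt (by positivity), Real.sq_sqrt (by positivity), Real.sq_sqrt (by positivity)]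
  have h' : ((X*Z*(B*A') : ℕ) : ℝ) = (((A*B')*(Y*W) : ℕ) : ℝ) := by exact_mod_cast h
  push_cast at h'
  field_simp
  linear_combination h'

lemma sum_two {d : ℕ} (f : Fin d → ℝ) (a b : Fin d) (hab : a ≠ b)
    (h : ∀ l, l ≠ a → l ≠ b → f l = 0) : ∑ l, f l = f a + f b := by
  rw [← Finset.sum_subset (Finset.subset_univ {a, b})
    (fun x _ hx => h x (fun h1 => hx (by simp [h1])) (fun h1 => hx (by simp [h1])))]
  exact Finset.sum_pair hab

lemma sum_three {d : ℕ} (f : Fin d → ℝ) (a b c : Fin d) (hab : a ≠ b) (hac : a ≠ c) (hbc : b ≠ c)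
    (h : ∀ l, l ≠ a → l ≠ b → l ≠ c → f l = 0) : ∑ l, f l = f a + f b + f c := by
  rw [← Finset.sum_subset (Finset.subset_univ {a, b, c})
    (fun x _ hx => h x (fun h1 => hx (by simp [h1])) (fun h1 => hx (by simp [h1]))
      (fun h1 => hx (by simp [h1])))]
  rw [Finset.sum_insert (by simp [hab, hac]), Finset.sum_pair hbc, add_assoc]

lemma LA (d k m : ℕ) (hm : m + 1 ≤ d - 1) (hd : 2 ≤ d) :
    Real.sqrt (((m+1)*(d-1-m)*(k+m+1)*(k+d-1-m) : ℕ)) * uu d k (m+1)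
      = (((k+m+1)*(k+d-1-m) : ℕ) : ℝ) * uu d k m := by
  unfold uu
  refine key _ _ _ _ _ _ (facpos _ _) (facpos _ _) ?_
  have e1 : d-1-(m+1) = d-2-m := by omega
  have e2 : k+(m+1) = k+m+1 := by omega
  have e3 : k+d-1-(m+1) = k+d-2-m := by omega
  have e4 : d-1-m = (d-2-m)+1 := by omega
  have e5 : k+d-1-m = (k+d-2-m)+1 := by omega
  rw [e1, e2, e3, e4, e5]
  simp only [Nat.factorial_succ]
  ring

lemma LB (d k m : ℕ) (hm : m + 1 ≤ d - 1) (hd : 2 ≤ d) :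
    Real.sqrt (((m+1)*(d-1-m)*(k+m+1)*(k+d-1-m) : ℕ)) * uu d k m
      = (((m+1)*(d-1-m) : ℕ) : ℝ) * uu d k (m+1) := by
  unfold uu
  refine key _ _ _ _ _ _ (facpos _ _) (facpos _ _) ?_
  have e1 : d-1-(m+1) = d-2-m := by omega
  have e2 : k+(m+1) = k+m+1 := by omega
  have e3 : k+d-1-(m+1) = k+d-2-m := by omega
  have e4 : d-1-m = (d-2-m)+1 := by omega
  have e5 : k+d-1-m = (k+d-2-m)+1 := by omega
  rw [e1, e2, e3, e4, e5]
  simp only [Nat.factorial_succ]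
  ring


lemma LAm (d k n : ℕ) (hn : 1 ≤ n) (hnd : n ≤ d - 1) (hd : 2 ≤ d) :
    Real.sqrt ((n*(d-n)*(k+n)*(k+d-n) : ℕ)) * uu d k n
      = (((k+n)*(k+d-n) : ℕ) : ℝ) * uu d k (n-1) := by
  have h := LA d k (n-1) (by omega) hd
  rw [show n-1+1 = n from by omega, show d-1-(n-1) = d-n from by omega,
      show k+(n-1)+1 = k+n from by omega, show k+d-1-(n-1) = k+d-n from by omega] at h
  exact h

lemma LBm (d k n : ℕ) (hn : 1 ≤ n) (hnd : n ≤ d - 1) (hd : 2 ≤ d) :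
    Real.sqrt ((n*(d-n)*(k+n)*(k+d-n) : ℕ)) * uu d k (n-1)
      = ((n*(d-n) : ℕ) : ℝ) * uu d k n := by
  have h := LB d k (n-1) (by omega) hd
  rw [show n-1+1 = n from by omega, show d-1-(n-1) = d-n from by omega,
      show k+(n-1)+1 = k+n from by omega, show k+d-1-(n-1) = k+d-n from by omega] at h
  exact h

lemma coefA1 (d k n : ℕ) (hd : 2 ≤ d) (hn : n = 0) :
    (k+d-1)*(k+1) + 2*n*(d-1-n) = (n+1)*(d-1-n) + k*(k+d) := by
  subst hn
  obtain ⟨a, ha⟩ : ∃ a, d = a + 2 := ⟨d-2, by omega⟩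
  subst ha
  rw [show k+(a+2)-1 = k+a+1 from by omega, show a+2-1-0 = a+1 from by omega]
  ring

lemma coefA2 (d k n : ℕ) (hd : 2 ≤ d) (hn : n = 0) :
    (k+d-1)*(k+1) + 2*n*(d-1-n) = (k+n+1)*(k+d-1-n) := by
  subst hn
  obtain ⟨a, ha⟩ : ∃ a, d = a + 2 := ⟨d-2, by omega⟩
  subst ha
  rw [show k+(a+2)-1 = k+a+1 from by omega, show a+2-1-0 = a+1 from by omega]
  simp only [Nat.sub_zero]
  ring

lemma coefB1 (d k n : ℕ) (hd : 2 ≤ d) (hn : n = d - 1) :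
    (k+d-1)*(k+1) + 2*n*(d-1-n) = n*(d-n) + k*(k+d) := by
  obtain ⟨a, ha⟩ : ∃ a, d = a + 2 := ⟨d-2, by omega⟩
  subst ha
  subst hn
  rw [show k+(a+2)-1 = k+a+1 from by omega, show a+2-1-(a+2-1) = 0 from by omega,
    show a+2-1 = a+1 from by omega, show a+2-(a+1) = 1 from by omega]
  ring

lemma coefB2 (d k n : ℕ) (hd : 2 ≤ d) (hn : n = d - 1) :
    (k+d-1)*(k+1) + 2*n*(d-1-n) = (k+n)*(k+d-n) := by
  obtain ⟨a, ha⟩ : ∃ a, d = a + 2 := ⟨d-2, by omega⟩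
  subst ha
  subst hn
  rw [show k+(a+2)-1 = k+a+1 from by omega, show a+2-1-(a+2-1) = 0 from by omega,
    show a+2-1 = a+1 from by omega, show k+(a+2)-(a+1) = k+1 from by omega]
  ring

lemma coef1 (d k n : ℕ) (hd : 2 ≤ d) (h1 : 1 ≤ n) (hn : n ≤ d - 1) :
    (k+d-1)*(k+1) + 2*n*(d-1-n) = n*(d-n) + (n+1)*(d-1-n) + k*(k+d) := by
  obtain ⟨a, ha⟩ : ∃ a, d = n + a + 1 := ⟨d-n-1, by omega⟩
  subst ha
  rw [show k+(n+a+1)-1 = k+n+a from by omega, show n+a+1-1-n = a from by omega,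
    show n+a+1-n = a+1 from by omega, show k+(n+a+1) = k+n+a+1 from by omega]
  ring

lemma coef2 (d k n : ℕ) (hd : 2 ≤ d) (h1 : 1 ≤ n) (hn : n ≤ d - 1) :
    (k+d-1)*(k+1) + 2*n*(d-1-n) = (k+n)*(k+d-n) + (n+1)*(d-1-n) := by
  obtain ⟨a, ha⟩ : ∃ a, d = n + a + 1 := ⟨d-n-1, by omega⟩
  subst ha
  rw [show k+(n+a+1)-1 = k+n+a from by omega, show n+a+1-1-n = a from by omega,
    show k+(n+a+1)-n = k+a+1 from by omega]
  ring

lemma coef3 (d k n : ℕ) (hd : 2 ≤ d) (hn : n + 1 ≤ d - 1) :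
    (k+d-1)*(k+1) + 2*n*(d-1-n) = n*(d-n) + (k+n+1)*(k+d-1-n) := by
  obtain ⟨a, ha⟩ : ∃ a, d = n + a + 1 := ⟨d-n-1, by omega⟩
  subst ha
  rw [show k+(n+a+1)-1 = k+n+a from by omega, show n+a+1-1-n = a from by omega,
    show n+a+1-n = a+1 from by omega, show k+n+a-n = k+a from by omega]
  ring


lemma leafA (u2 u3 s2 c C2 D : ℝ) (hu3 : u3 ≠ 0) (hc : c ≠ 0)
    (e2 : s2 * u2 = C2 * u3) (hD : D = C2 + c) :
    1 * (D/c) + u2/u3 * (-s2/c) = 1 := by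
  subst hD; field_simp; linear_combination -e2

lemma leafAr (ui u2 u3 s2 c C2 D : ℝ) (hui : ui ≠ 0) (hu3 : u3 ≠ 0) (hc : c ≠ 0)
    (e2 : s2 * u3 = C2 * u2) (hD : D = C2) :
    u2/ui * (D/c) + u3/ui * (-s2/c) = 0 := by
  subst hD; field_simp; linear_combination -e2

lemma leafC1 (ui u1 u2 u3 s1 s2 c C1 C2 D : ℝ) (h1 : u1 ≠ 0) (h2' : u2 ≠ 0) (h3 : u3 ≠ 0)
    (hc : c ≠ 0)
    (e1 : s1 * u2 = C1 * u1) (e2 : s2 * u2 = C2 * u3) (hD : D = C1 + C2) :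
    ui/u1 * (-s1/c) + ui/u2 * (D/c) + ui/u3 * (-s2/c) = 0 := by
  subst hD; field_simp; linear_combination (-ui*u3)*e1 + (-ui*u1)*e2

lemma leafC2 (u1 u2 u3 s1 s2 c C1 C2 D : ℝ) (h2 : u2 ≠ 0) (h3 : u3 ≠ 0) (hc : c ≠ 0)
    (e1 : s1 * u1 = C1 * u2) (e2 : s2 * u2 = C2 * u3) (hD : D = C1 + C2 + c) :
    u1/u2 * (-s1/c) + 1*(D/c) + u2/u3 * (-s2/c) = 1 := by
  subst hD; field_simp; linear_combination (-u3)*e1 + (-u2)*e2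

lemma leafC3 (ui u1 u2 u3 s1 s2 c C1 C2 D : ℝ) (hui : ui ≠ 0) (hc : c ≠ 0)
    (e1 : s1 * u1 = C1 * u2) (e2 : s2 * u3 = C2 * u2) (hD : D = C1 + C2) :
    u1/ui * (-s1/c) + u2/ui * (D/c) + u3/ui * (-s2/c) = 0 := by
  subst hD; field_simp; linear_combination -e1 - e2

lemma leafB1 (ui u1 u2 s1 c C1 D : ℝ) (h1 : u1 ≠ 0) (h2 : u2 ≠ 0) (hc : c ≠ 0)
    (e1 : s1 * u2 = C1 * u1) (hD : D = C1) :
    ui/u1 * (-s1/c) + ui/u2 * (D/c) = 0 := by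
  subst hD; field_simp; linear_combination (-ui)*e1

lemma leafB2 (u1 u2 s1 c C1 D : ℝ) (h2 : u2 ≠ 0) (hc : c ≠ 0)
    (e1 : s1 * u1 = C1 * u2) (hD : D = C1 + c) :
    u1/u2 * (-s1/c) + 1*(D/c) = 1 := by
  subst hD; field_simp; linear_combination -e1

/-- The inverse of `R_k` is an explicit symmetric tridiagonal matrix. -/
theorem statement9 (d k : ℕ) (hd : 2 ≤ d) (hk : 1 ≤ k)
    (R T : Matrix (Fin d) (Fin d) ℝ)
    (hRdiag : ∀ i : Fin d, R i i = 1)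
    (hRoff : ∀ i j : Fin d, i < j →
      R i j = Real.sqrt (((j.1.factorial * (d-1-i.1).factorial : ℕ) : ℝ) /
                ((i.1.factorial * (d-1-j.1).factorial : ℕ) : ℝ)) *
              Real.sqrt ((((k+d-1-j.1).factorial * (k+i.1).factorial : ℕ) : ℝ) /
                (((k+d-1-i.1).factorial * (k+j.1).factorial : ℕ) : ℝ)))
    (hRsymm : ∀ i j : Fin d, R i j = R j i)
    (hTdiag : ∀ i : Fin d,
      T i i = (((k+d-1)*(k+1) + 2*i.1*(d-1-i.1) : ℕ) : ℝ) / ((k*(k+d) : ℕ) : ℝ))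
    (hTsub : ∀ i j : Fin d, j.1 = i.1 + 1 →
      T i j = -(Real.sqrt (((i.1+1)*(d-1-i.1)*(k+i.1+1)*(k+d-1-i.1) : ℕ) : ℝ))
                / ((k*(k+d) : ℕ) : ℝ) ∧ T j i = T i j)
    (hTzero : ∀ i j : Fin d, i.1 + 1 < j.1 → T i j = 0 ∧ T j i = 0) :
    R * T = 1 ∧ T * R = 1 := by
  have hc : (0:ℝ) < ((k*(k+d) : ℕ) : ℝ) := by
    have : 0 < k*(k+d) := Nat.mul_pos (by omega) (by omega)
    exact_mod_cast this
  have hRu : ∀ i j : Fin d, i ≤ j → R i j = uu d k i.1 / uu d k j.1 := by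
    intro i j hij
    rcases eq_or_lt_of_le hij with h | h
    · rw [h, hRdiag, div_self (uu_pos d k j.1).ne']
    · rw [hRoff i j h]
      unfold uu
      exact sqrt_frac_mul _ _ _ _ _ _ _ _ (facpos _ _) (facpos _ _) (facpos _ _) (facpos _ _)
        (facpos _ _) (facpos _ _) (by ring)
  have hmain : ∀ i j : Fin d, ∑ l, R i l * T l j = if i = j then 1 else 0 := by
    intro i j
    have hjd : j.1 < d := j.2
    have hid : i.1 < d := i.2
    rcases Nat.eq_zero_or_pos j.1 with h0 | h1
    · -- j.1 = 0, terms at j and jp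
      have hjp : j.1 + 1 < d := by omega
      set jp : Fin d := ⟨j.1+1, hjp⟩ with hjpdef
      have hjp1 : jp.1 = j.1 + 1 := rfl
      have hjjp : j ≠ jp := by
        intro h; have := congrArg Fin.val h; omega
      have hz : ∀ l : Fin d, l ≠ j → l ≠ jp → R i l * T l j = 0 := by
        intro l hlj hlp
        have hlj' : l.1 ≠ j.1 := fun h => hlj (Fin.ext h)
        have hlp' : l.1 ≠ j.1 + 1 := fun h => hlp (Fin.ext h)
        have : j.1 + 1 < l.1 := by omega
        rw [(hTzero j l this).2, mul_zero]
      rw [sum_two _ j jp hjjp hz]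
      have hTjj : T j j = _ := hTdiag j
      have hTp : T jp j = -(Real.sqrt (((j.1+1)*(d-1-j.1)*(k+j.1+1)*(k+d-1-j.1) : ℕ) : ℝ))
                / ((k*(k+d) : ℕ) : ℝ) := by
        have h' := hTsub j jp rfl
        rw [h'.2, h'.1]
      rcases eq_or_ne i j with rfl | hij
      · rw [if_pos rfl]
        have hRp : R i jp = uu d k i.1 / uu d k (i.1+1) := by
          rw [hRu i jp (by rw [Fin.le_def]; omega), hjp1]
        have hLBp := LB d k i.1 (by omega) hd
        have hco : (((k+d-1)*(k+1) + 2*i.1*(d-1-i.1) : ℕ) : ℝ)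
            = (((i.1+1)*(d-1-i.1) : ℕ) : ℝ) + ((k*(k+d) : ℕ) : ℝ) := by
          exact_mod_cast congrArg (Nat.cast (R:=ℝ)) (coefA1 d k i.1 hd h0)
        rw [hRdiag, hTjj, hTp, hRp]
        have p2 := (uu_pos d k i.1).ne'
        have p3 := (uu_pos d k (i.1+1)).ne'
        exact leafA _ _ _ _ _ _ p3 hc.ne' hLBp hco
      · rw [if_neg hij]
        have hij' : j.1 < i.1 := by
          have : i.1 ≠ j.1 := fun h => hij (Fin.ext h); omega
        have hRj : R i j = uu d k j.1 / uu d k i.1 := by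
          rw [hRsymm i j, hRu j i (by rw [Fin.le_def]; omega)]
        have hRp : R i jp = uu d k (j.1+1) / uu d k i.1 := by
          rw [hRsymm i jp, hRu jp i (by rw [Fin.le_def]; omega), hjp1]
        have hLAp := LA d k j.1 (by omega) hd
        have hco : (((k+d-1)*(k+1) + 2*j.1*(d-1-j.1) : ℕ) : ℝ)
            = (((k+j.1+1)*(k+d-1-j.1) : ℕ) : ℝ) := by
          exact_mod_cast congrArg (Nat.cast (R:=ℝ)) (coefA2 d k j.1 hd h0)
        rw [hRj, hRp, hTjj, hTp]
        have p1 := (uu_pos d k j.1).ne'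
        have p2 := (uu_pos d k (j.1+1)).ne'
        have p3 := (uu_pos d k i.1).ne'
        exact leafAr _ _ _ _ _ _ _ p3 p2 hc.ne' hLAp hco
    · by_cases h2 : j.1 + 1 ≤ d - 1
      · -- interior: 1 ≤ j.1 ≤ d-2
        have hjm : j.1 - 1 < d := by omega
        have hjp : j.1 + 1 < d := by omega
        set jm : Fin d := ⟨j.1-1, hjm⟩ with hjmdef
        set jp : Fin d := ⟨j.1+1, hjp⟩ with hjpdef
        have hjm1 : jm.1 = j.1 - 1 := rfl
        have hjp1 : jp.1 = j.1 + 1 := rfl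
        have hne1 : jm ≠ j := by
          intro h; have := congrArg Fin.val h; omega
        have hne2 : jm ≠ jp := by
          intro h; have := congrArg Fin.val h; omega
        have hne3 : j ≠ jp := by
          intro h; have := congrArg Fin.val h; omega
        have hz : ∀ l : Fin d, l ≠ jm → l ≠ j → l ≠ jp → R i l * T l j = 0 := by
          intro l hlm hlj hlp
          have hlm' : l.1 ≠ j.1 - 1 := fun h => hlm (Fin.ext h)
          have hlj' : l.1 ≠ j.1 := fun h => hlj (Fin.ext h)
          have hlp' : l.1 ≠ j.1 + 1 := fun h => hlp (Fin.ext h)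
          rcases (by omega : l.1 + 1 < j.1 ∨ j.1 + 1 < l.1) with h | h
          · rw [(hTzero l j h).1, mul_zero]
          · rw [(hTzero j l h).2, mul_zero]
        rw [sum_three _ jm j jp hne1 hne2 hne3 hz]
        have hTjj : T j j = _ := hTdiag j
        have hTm : T jm j = -(Real.sqrt (((j.1)*(d-j.1)*(k+j.1)*(k+d-j.1) : ℕ) : ℝ))
                  / ((k*(k+d) : ℕ) : ℝ) := by
          have h' := (hTsub jm j (by omega)).1
          rw [h']
          have f1 : jm.1+1 = j.1 := by omega
          have f2 : d-1-jm.1 = d-j.1 := by omega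
          have f3 : k+jm.1+1 = k+j.1 := by omega
          have f4 : k+d-1-jm.1 = k+d-j.1 := by omega
          rw [f1, f2, f3, f4]
        have hTp : T jp j = -(Real.sqrt (((j.1+1)*(d-1-j.1)*(k+j.1+1)*(k+d-1-j.1) : ℕ) : ℝ))
                  / ((k*(k+d) : ℕ) : ℝ) := by
          have h' := hTsub j jp rfl
          rw [h'.2, h'.1]
        rcases lt_trichotomy i.1 j.1 with hlt | heq | hgt
        · rw [if_neg (fun h => by rw [h] at hlt; omega)]
          have hRm : R i jm = uu d k i.1 / uu d k (j.1-1) := by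
            rw [hRu i jm (by rw [Fin.le_def]; omega), hjm1]
          have hRj : R i j = uu d k i.1 / uu d k j.1 := hRu i j (by rw [Fin.le_def]; omega)
          have hRp : R i jp = uu d k i.1 / uu d k (j.1+1) := by
            rw [hRu i jp (by rw [Fin.le_def]; omega), hjp1]
          have hLAm := LAm d k j.1 h1 (by omega) hd
          have hLBp := LB d k j.1 h2 hd
          have hco : (((k+d-1)*(k+1) + 2*j.1*(d-1-j.1) : ℕ) : ℝ)
              = (((k+j.1)*(k+d-j.1) : ℕ) : ℝ) + (((j.1+1)*(d-1-j.1) : ℕ) : ℝ) := by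
            exact_mod_cast congrArg (Nat.cast (R:=ℝ)) (coef2 d k j.1 hd h1 (by omega))
          rw [hRm, hRj, hRp, hTm, hTjj, hTp]
          have p1 := (uu_pos d k (j.1-1)).ne'
          have p2 := (uu_pos d k j.1).ne'
          have p3 := (uu_pos d k (j.1+1)).ne'
          have p4 := (uu_pos d k i.1).ne'
          exact leafC1 _ _ _ _ _ _ _ _ _ _ p1 p2 p3 hc.ne' hLAm hLBp hco
        · have : i = j := Fin.ext heq
          subst this
          rw [if_pos rfl]
          have hRm : R i jm = uu d k (i.1-1) / uu d k i.1 := by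
            rw [hRsymm i jm, hRu jm i (by rw [Fin.le_def]; omega), hjm1]
          have hRp : R i jp = uu d k i.1 / uu d k (i.1+1) := by
            rw [hRu i jp (by rw [Fin.le_def]; omega), hjp1]
          have hLBm := LBm d k i.1 h1 (by omega) hd
          have hLBp := LB d k i.1 h2 hd
          have hco : (((k+d-1)*(k+1) + 2*i.1*(d-1-i.1) : ℕ) : ℝ)
              = ((i.1*(d-i.1) : ℕ) : ℝ) + (((i.1+1)*(d-1-i.1) : ℕ) : ℝ) + ((k*(k+d) : ℕ) : ℝ) := by
            exact_mod_cast congrArg (Nat.cast (R:=ℝ)) (coef1 d k i.1 hd h1 (by omega))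
          rw [hRm, hRdiag, hTm, hTjj, hRp, hTp]
          have p1 := (uu_pos d k (i.1-1)).ne'
          have p2 := (uu_pos d k i.1).ne'
          have p3 := (uu_pos d k (i.1+1)).ne'
          exact leafC2 _ _ _ _ _ _ _ _ _ p2 p3 hc.ne' hLBm hLBp hco
        · rw [if_neg (fun h => by rw [h] at hgt; omega)]
          have hRm : R i jm = uu d k (j.1-1) / uu d k i.1 := by
            rw [hRsymm i jm, hRu jm i (by rw [Fin.le_def]; omega), hjm1]
          have hRj : R i j = uu d k j.1 / uu d k i.1 := by
            rw [hRsymm i j, hRu j i (by rw [Fin.le_def]; omega)]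
          have hRp : R i jp = uu d k (j.1+1) / uu d k i.1 := by
            rw [hRsymm i jp, hRu jp i (by rw [Fin.le_def]; omega), hjp1]
          have hLBm := LBm d k j.1 h1 (by omega) hd
          have hLAp := LA d k j.1 h2 hd
          have hco : (((k+d-1)*(k+1) + 2*j.1*(d-1-j.1) : ℕ) : ℝ)
              = ((j.1*(d-j.1) : ℕ) : ℝ) + (((k+j.1+1)*(k+d-1-j.1) : ℕ) : ℝ) := by
            exact_mod_cast congrArg (Nat.cast (R:=ℝ)) (coef3 d k j.1 hd h2)
          rw [hRm, hRj, hRp, hTm, hTjj, hTp]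
          have p1 := (uu_pos d k (j.1-1)).ne'
          have p2 := (uu_pos d k j.1).ne'
          have p3 := (uu_pos d k (j.1+1)).ne'
          have p4 := (uu_pos d k i.1).ne'
          exact leafC3 _ _ _ _ _ _ _ _ _ _ p4 hc.ne' hLBm hLAp hco
      · -- j.1 = d-1
        have hjn : j.1 = d - 1 := by omega
        have hjm : j.1 - 1 < d := by omega
        set jm : Fin d := ⟨j.1-1, hjm⟩ with hjmdef
        have hjm1 : jm.1 = j.1 - 1 := rfl
        have hne1 : jm ≠ j := by
          intro h; have := congrArg Fin.val h; omega
        have hz : ∀ l : Fin d, l ≠ jm → l ≠ j → R i l * T l j = 0 := by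
          intro l hlm hlj
          have hlm' : l.1 ≠ j.1 - 1 := fun h => hlm (Fin.ext h)
          have hlj' : l.1 ≠ j.1 := fun h => hlj (Fin.ext h)
          have hld : l.1 < d := l.2
          have : l.1 + 1 < j.1 := by omega
          rw [(hTzero l j this).1, mul_zero]
        rw [sum_two _ jm j hne1 hz]
        have hTjj : T j j = _ := hTdiag j
        have hTm : T jm j = -(Real.sqrt (((j.1)*(d-j.1)*(k+j.1)*(k+d-j.1) : ℕ) : ℝ))
                  / ((k*(k+d) : ℕ) : ℝ) := by
          have h' := (hTsub jm j (by omega)).1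
          rw [h']
          have f1 : jm.1+1 = j.1 := by omega
          have f2 : d-1-jm.1 = d-j.1 := by omega
          have f3 : k+jm.1+1 = k+j.1 := by omega
          have f4 : k+d-1-jm.1 = k+d-j.1 := by omega
          rw [f1, f2, f3, f4]
        rcases lt_trichotomy i.1 j.1 with hlt | heq | hgt
        · rw [if_neg (fun h => by rw [h] at hlt; omega)]
          have hRm : R i jm = uu d k i.1 / uu d k (j.1-1) := by
            rw [hRu i jm (by rw [Fin.le_def]; omega), hjm1]
          have hRj : R i j = uu d k i.1 / uu d k j.1 := hRu i j (by rw [Fin.le_def]; omega)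
          have hLAm := LAm d k j.1 h1 (by omega) hd
          have hco : (((k+d-1)*(k+1) + 2*j.1*(d-1-j.1) : ℕ) : ℝ)
              = (((k+j.1)*(k+d-j.1) : ℕ) : ℝ) := by
            exact_mod_cast congrArg (Nat.cast (R:=ℝ)) (coefB2 d k j.1 hd hjn)
          rw [hRm, hRj, hTm, hTjj]
          have p1 := (uu_pos d k (j.1-1)).ne'
          have p2 := (uu_pos d k j.1).ne'
          have p4 := (uu_pos d k i.1).ne'
          exact leafB1 _ _ _ _ _ _ _ p1 p2 hc.ne' hLAm hco
        · have : i = j := Fin.ext heq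
          subst this
          rw [if_pos rfl]
          have hRm : R i jm = uu d k (i.1-1) / uu d k i.1 := by
            rw [hRsymm i jm, hRu jm i (by rw [Fin.le_def]; omega), hjm1]
          have hLBm := LBm d k i.1 h1 (by omega) hd
          have hco : (((k+d-1)*(k+1) + 2*i.1*(d-1-i.1) : ℕ) : ℝ)
              = ((i.1*(d-i.1) : ℕ) : ℝ) + ((k*(k+d) : ℕ) : ℝ) := by
            exact_mod_cast congrArg (Nat.cast (R:=ℝ)) (coefB1 d k i.1 hd hjn)
          rw [hRm, hRdiag, hTm, hTjj]
          have p1 := (uu_pos d k (i.1-1)).ne'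
          have p2 := (uu_pos d k i.1).ne'
          exact leafB2 _ _ _ _ _ _ p2 hc.ne' hLBm hco
        · omega
  have hTsymm : ∀ a b : Fin d, T a b = T b a := by
    intro a b
    rcases lt_trichotomy a.1 b.1 with h | h | h
    · rcases (by omega : b.1 = a.1 + 1 ∨ a.1 + 1 < b.1) with h' | h'
      · exact ((hTsub a b h').2).symm
      · rw [(hTzero a b h').1, (hTzero a b h').2]
    · rw [Fin.ext h]
    · rcases (by omega : a.1 = b.1 + 1 ∨ b.1 + 1 < a.1) with h' | h'
      · exact (hTsub b a h').2
      · rw [(hTzero b a h').1, (hTzero b a h').2]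
  constructor
  · ext i j
    rw [Matrix.mul_apply, Matrix.one_apply]
    exact hmain i j
  · ext i j
    rw [Matrix.mul_apply, Matrix.one_apply]
    have : ∀ l, T i l * R l j = R j l * T l i := by
      intro l; rw [hTsymm i l, hRsymm j l]; ring
    rw [Finset.sum_congr rfl (fun l _ => this l), hmain j i]
    by_cases h : i = j
    · simp [h]
    · rw [if_neg (fun hh : j = i => h hh.symm), if_neg h]
end

section
/- The vector v with components v_i = (-1)^{i-1} √( (d-1)!/(d-i)! · (k+d-1)!/(k+d-i)! · k!/(k+i-1)! · 1/(i-1)! ) is an eigenvector of R_k^{-1} with eigenvalue (k+d-1)/k, and (k+d-1)/k is the largest eigenvalue of R_k^{-1}. -/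
open MeasureTheory Real

noncomputable def aa (d k p : ℕ) : ℝ :=
  (((d-1).factorial : ℕ) : ℝ) / (((d-1-p).factorial : ℕ) : ℝ) *
    ((((k+d-1).factorial : ℕ) : ℝ) / (((k+d-1-p).factorial : ℕ) : ℝ)) *
    (((k.factorial : ℕ) : ℝ) / (((k+p).factorial : ℕ) : ℝ)) *
    (1 / ((p.factorial : ℕ) : ℝ))

lemma aa_pos (d k p : ℕ) : 0 < aa d k p := by
  unfold aa
  have h := fun n : ℕ => Nat.cast_pos (α := ℝ) |>.mpr (Nat.factorial_pos n)
  positivity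

lemma ratio (d k p : ℕ) (hp : p + 1 ≤ d - 1) (hd : 2 ≤ d) :
    (((p+1)*(k+p+1) : ℕ) : ℝ) * aa d k (p+1) = (((d-1-p)*(k+d-1-p) : ℕ) : ℝ) * aa d k p := by
  unfold aa
  have h1 : (d-1-p) = (d-1-(p+1)) + 1 := by omega
  have h2 : (k+d-1-p) = (k+d-1-(p+1)) + 1 := by omega
  have h3 : (k+(p+1)) = (k+p) + 1 := by omega
  rw [h1, h2, h3, Nat.factorial_succ, Nat.factorial_succ, Nat.factorial_succ, Nat.factorial_succ]
  push_cast
  have hne := fun n : ℕ => Nat.cast_ne_zero (R := ℝ) |>.mpr (Nat.factorial_ne_zero n)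
  generalize ((d-1).factorial : ℝ) = A
  generalize hB : ((d-1-(p+1)).factorial : ℝ) = B
  generalize ((k+d-1).factorial : ℝ) = C
  generalize hE : ((k+d-1-(p+1)).factorial : ℝ) = E
  generalize (Nat.factorial k : ℝ) = K
  generalize hG : ((k+p).factorial : ℝ) = G
  generalize hP : (p.factorial : ℝ) = P
  generalize hx : ((d-1-(p+1) : ℕ) : ℝ) = x
  generalize hy : ((k+d-1-(p+1) : ℕ) : ℝ) = y
  have hB0 : B ≠ 0 := hB ▸ hne _
  have hE0 : E ≠ 0 := hE ▸ hne _
  have hG0 : G ≠ 0 := hG ▸ hne _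
  have hP0 : P ≠ 0 := hP ▸ hne _
  have hx0 : x + 1 ≠ 0 := by rw [← hx]; positivity
  have hy0 : y + 1 ≠ 0 := by rw [← hy]; positivity
  have hk1 : (k:ℝ) + (p:ℝ) + 1 ≠ 0 := by positivity
  have hp1 : (p:ℝ) + 1 ≠ 0 := by positivity
  field_simp

lemma sqrt_helper {x c b : ℝ} (hc : 0 ≤ c) (h : x = c^2*b) :
    Real.sqrt x = c * Real.sqrt b := by
  rw [h, Real.sqrt_mul (sq_nonneg c), Real.sqrt_sq hc]

lemma L1 (d k p : ℕ) (hp : p + 1 ≤ d - 1) (hd : 2 ≤ d) :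
    Real.sqrt ((((p+1)*(d-1-p)*(k+p+1)*(k+d-1-p) : ℕ)) : ℝ) * Real.sqrt (aa d k (p+1))
      = (((d-1-p)*(k+d-1-p) : ℕ) : ℝ) * Real.sqrt (aa d k p) := by
  rw [← Real.sqrt_mul (by positivity)]
  apply sqrt_helper (by positivity)
  have h := ratio d k p hp hd
  have e : ((((p+1)*(d-1-p)*(k+p+1)*(k+d-1-p) : ℕ)) : ℝ) * aa d k (p+1)
      = (((d-1-p)*(k+d-1-p) : ℕ) : ℝ) * ((((p+1)*(k+p+1) : ℕ) : ℝ) * aa d k (p+1)) := by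
    push_cast; ring
  rw [e, h]; push_cast; ring

lemma L2 (d k p : ℕ) (hp : p + 1 ≤ d - 1) (hd : 2 ≤ d) :
    Real.sqrt ((((p+1)*(d-1-p)*(k+p+1)*(k+d-1-p) : ℕ)) : ℝ) * Real.sqrt (aa d k p)
      = (((p+1)*(k+p+1) : ℕ) : ℝ) * Real.sqrt (aa d k (p+1)) := by
  rw [← Real.sqrt_mul (by positivity)]
  apply sqrt_helper (by positivity)
  have h := ratio d k p hp hd
  have hDE : (((d-1-p)*(k+d-1-p) : ℕ) : ℝ) ≠ 0 := by
    have : 0 < (d-1-p)*(k+d-1-p) := by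
      apply Nat.mul_pos <;> omega
    exact_mod_cast this.ne'
  apply mul_left_cancel₀ hDE
  have e : (((d-1-p)*(k+d-1-p) : ℕ) : ℝ) * (((((p+1)*(d-1-p)*(k+p+1)*(k+d-1-p) : ℕ)) : ℝ) * aa d k p)
      = ((((p+1)*(d-1-p)*(k+p+1)*(k+d-1-p) : ℕ)) : ℝ) * ((((d-1-p)*(k+d-1-p) : ℕ) : ℝ) * aa d k p) := by
    push_cast; ring
  rw [e, ← h]; push_cast; ring

lemma sum3 {d : ℕ} (f : Fin d → ℝ) (a b c : Fin d) (hab : a ≠ b) (hac : a ≠ c) (hbc : b ≠ c)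
    (h0 : ∀ j, j ≠ a → j ≠ b → j ≠ c → f j = 0) : ∑ j, f j = f a + f b + f c := by
  rw [← Finset.sum_subset (Finset.subset_univ ({a, b, c} : Finset (Fin d)))]
  · rw [show ({a,b,c} : Finset (Fin d)) = insert a (insert b {c}) from rfl,
      Finset.sum_insert (by simp [hab, hac]), Finset.sum_insert (by simp [hbc]),
      Finset.sum_singleton, add_assoc]
  · intro j _ hj
    simp only [Finset.mem_insert, Finset.mem_singleton, not_or] at hj
    exact h0 j hj.1 hj.2.1 hj.2.2

lemma sum2 {d : ℕ} (f : Fin d → ℝ) (a b : Fin d) (hab : a ≠ b)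
    (h0 : ∀ j, j ≠ a → j ≠ b → f j = 0) : ∑ j, f j = f a + f b := by
  rw [← Finset.sum_subset (Finset.subset_univ ({a, b} : Finset (Fin d)))]
  · rw [show ({a,b} : Finset (Fin d)) = insert a {b} from rfl,
      Finset.sum_insert (by simp [hab]), Finset.sum_singleton]
  · intro j _ hj
    simp only [Finset.mem_insert, Finset.mem_singleton, not_or] at hj
    exact h0 j hj.1 hj.2

lemma neg_one_sq_pow (n : ℕ) : ((-1:ℝ))^n * (-1)^n = 1 := by
  rw [← pow_add]
  exact Even.neg_one_pow ⟨n, by ring⟩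

/-- The vector `v` is an eigenvector of `R_k⁻¹` (the explicit tridiagonal matrix)
with eigenvalue `(k+d-1)/k`, which is the largest eigenvalue. -/
theorem statement10 (d k : ℕ) (hd : 2 ≤ d) (hk : 1 ≤ k)
    (T : Matrix (Fin d) (Fin d) ℝ)
    (hTdiag : ∀ i : Fin d,
      T i i = (((k+d-1)*(k+1) + 2*i.1*(d-1-i.1) : ℕ) : ℝ) / ((k*(k+d) : ℕ) : ℝ))
    (hTsub : ∀ i j : Fin d, j.1 = i.1 + 1 →
      T i j = -(Real.sqrt (((i.1+1)*(d-1-i.1)*(k+i.1+1)*(k+d-1-i.1) : ℕ) : ℝ))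
                / ((k*(k+d) : ℕ) : ℝ) ∧ T j i = T i j)
    (hTzero : ∀ i j : Fin d, i.1 + 1 < j.1 → T i j = 0 ∧ T j i = 0)
    (v : Fin d → ℝ)
    (hv : ∀ p : Fin d, v p = (-1)^p.1 *
      Real.sqrt ((((d-1).factorial : ℕ) : ℝ) / (((d-1-p.1).factorial : ℕ) : ℝ) *
        ((((k+d-1).factorial : ℕ) : ℝ) / (((k+d-1-p.1).factorial : ℕ) : ℝ)) *
        (((k.factorial : ℕ) : ℝ) / (((k+p.1).factorial : ℕ) : ℝ)) *
        (1 / ((p.1.factorial : ℕ) : ℝ)))) :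
    T.mulVec v = (((k:ℝ)+d-1)/k) • v ∧ v ≠ 0 ∧
    (∀ μ : ℝ, Module.End.HasEigenvalue (Matrix.toLin' T) μ → μ ≤ ((k:ℝ)+d-1)/k) := by
  have hv' : ∀ p : Fin d, v p = (-1)^p.1 * Real.sqrt (aa d k p.1) := hv
  set lam : ℝ := ((k:ℝ)+d-1)/k with hlam
  set c : ℝ := ((k*(k+d) : ℕ) : ℝ) with hcdef
  have hc : 0 < c := by
    rw [hcdef]
    have : 0 < k*(k+d) := Nat.mul_pos (by omega) (by omega)
    exact_mod_cast this
  -- the coefficient identity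
  have natid : ∀ p : ℕ, p ≤ d - 1 →
      p*(k+p) + ((k+d-1)*(k+1)+2*p*(d-1-p)) + (d-1-p)*(k+d-1-p) = (k+d-1)*(k+d) := by
    intro p hp
    obtain ⟨e, he⟩ : ∃ e, d = p + e + 1 := ⟨d - 1 - p, by omega⟩
    subst he
    have h2 : p + e + 1 - 1 - p = e := by omega
    have h1 : p + e + 1 - 1 = p + e := by omega
    have h4 : k + (p+e+1) - 1 - p = k + e := by omega
    have h3 : k + (p+e+1) - 1 = k + p + e := by omega
    rw [h2, h4, h3]
    ring
  have coeff : ∀ p : ℕ, p ≤ d - 1 →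
      ((p*(k+p) : ℕ):ℝ)/c + (((k+d-1)*(k+1)+2*p*(d-1-p) : ℕ):ℝ)/c
        + (((d-1-p)*(k+d-1-p):ℕ):ℝ)/c = lam := by
    intro p hp
    rw [← add_div, ← add_div, ← Nat.cast_add, ← Nat.cast_add, natid p hp,
      hcdef, hlam]
    have hk0 : (0:ℝ) < k := by exact_mod_cast (by omega : 0 < k)
    have hkd : (0:ℝ) < (k:ℝ) + d := by positivity
    push_cast [Nat.cast_sub (show 1 ≤ k+d by omega)]
    rw [div_eq_div_iff (by positivity) hk0.ne']
    ring
  -- the key row computation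
  have key : ∀ p : Fin d, (∑ j, T p j * v j) = lam * v p := by
    intro p
    have hple : p.1 ≤ d - 1 := by omega
    by_cases hp0 : p.1 = 0
    · -- first row
      have hpp : p.1 + 1 < d := by omega
      set pp : Fin d := ⟨p.1+1, hpp⟩ with hppdef
      have hs := sum2 (fun j => T p j * v j) p pp
        (by simp [Fin.ext_iff, hppdef])
        (by
          intro j hj1 hj2
          have h1 : j.1 ≠ p.1 := fun h => hj1 (Fin.ext h)
          have h2 : j.1 ≠ p.1 + 1 := fun h => hj2 (Fin.ext h)
          have : p.1 + 1 < j.1 := by omega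
          simp [(hTzero p j this).1])
      rw [hs]
      have hT2 := hTsub p pp rfl
      rw [hT2.1, hTdiag p, hv' p, hv' pp]
      have S3 := L1 d k p.1 (by omega) hd
      have hA0 : ((p.1*(k+p.1) : ℕ) : ℝ) = 0 := by
        rw [hp0]; norm_num
      have hco := coeff p.1 hple
      simp only [hppdef]
      linear_combination (((-1:ℝ))^p.1 / c) * S3
        + ((-1:ℝ)^p.1 * Real.sqrt (aa d k p.1)) * hco
        + (-((-1:ℝ)^p.1 * Real.sqrt (aa d k p.1)) / c) * hA0
    · by_cases hpd : p.1 = d - 1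
      · -- last row
        obtain ⟨q, hq⟩ : ∃ q, p.1 = q + 1 := ⟨p.1 - 1, by omega⟩
        have hqd : q < d := by omega
        set pm : Fin d := ⟨q, hqd⟩ with hpmdef
        have hs := sum2 (fun j => T p j * v j) pm p
          (by simp [Fin.ext_iff, hpmdef]; try omega)
          (by
            intro j hj1 hj2
            have h1 : j.1 ≠ q := fun h => hj1 (Fin.ext h)
            have h2 : j.1 ≠ p.1 := fun h => hj2 (Fin.ext h)
            rcases (by omega : j.1 + 1 < p.1 ∨ p.1 + 1 < j.1) with h | h
            · simp [(hTzero j p h).2]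
            · simp [(hTzero p j h).1])
        rw [hs]
        have hT1 := hTsub pm p (by simp [hpmdef, hq])
        rw [hT1.2, hT1.1, hTdiag p, hv' p, hv' pm]
        have S1 := L2 d k q (by omega) hd
        have hB0 : (((d-1-p.1)*(k+d-1-p.1) : ℕ) : ℝ) = 0 := by
          have : d-1-p.1 = 0 := by omega
          rw [this]; norm_num
        have hco := coeff p.1 hple
        simp only [hpmdef]
        rw [hq]
        have hq' : (q+1)*(k+(q+1)) = (q+1)*(k+q+1) := by ring_nf
        rw [show p.1 = q+1 from hq] at hB0 hco
        rw [hq'] at hco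
        linear_combination ((-1:ℝ)^q * (-1) / c) * S1
          + ((-1:ℝ)^q * (-1) * Real.sqrt (aa d k (q+1))) * hco
          + ((-1:ℝ)^q * Real.sqrt (aa d k (q+1)) / c) * hB0
      · -- middle rows
        obtain ⟨q, hq⟩ : ∃ q, p.1 = q + 1 := ⟨p.1 - 1, by omega⟩
        have hqd : q < d := by omega
        have hppd : p.1 + 1 < d := by omega
        set pm : Fin d := ⟨q, hqd⟩ with hpmdef
        set pp : Fin d := ⟨p.1+1, hppd⟩ with hppdef
        have hs := sum3 (fun j => T p j * v j) pm p pp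
          (by simp [Fin.ext_iff, hpmdef]; try omega)
          (by simp [Fin.ext_iff, hpmdef, hppdef]; try omega)
          (by simp [Fin.ext_iff, hppdef]; try omega)
          (by
            intro j hj1 hj2 hj3
            have h1 : j.1 ≠ q := fun h => hj1 (Fin.ext h)
            have h2 : j.1 ≠ p.1 := fun h => hj2 (Fin.ext h)
            have h3 : j.1 ≠ p.1+1 := fun h => hj3 (Fin.ext h)
            rcases (by omega : j.1 + 1 < p.1 ∨ p.1 + 1 < j.1) with h | h
            · simp [(hTzero j p h).2]
            · simp [(hTzero p j h).1])
        rw [hs]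
        have hT1 := hTsub pm p (by simp [hpmdef, hq])
        have hT2 := hTsub p pp rfl
        rw [hT1.2, hT1.1, hT2.1, hTdiag p, hv' p, hv' pm, hv' pp]
        have S1 := L2 d k q (by omega) hd
        have S3 := L1 d k p.1 (by omega) hd
        have hco := coeff p.1 hple
        simp only [hpmdef, hppdef]
        rw [hq] at S3 hco ⊢
        have hq' : (q+1)*(k+(q+1)) = (q+1)*(k+q+1) := by ring_nf
        rw [hq'] at hco
        linear_combination ((-1:ℝ)^q * (-1) / c) * S1
          + ((-1:ℝ)^q * (-1) / c) * S3
          + ((-1:ℝ)^q * (-1) * Real.sqrt (aa d k (q+1))) * hco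
  -- part 1
  have part1 : T.mulVec v = lam • v := by
    funext p
    rw [Matrix.mulVec, Pi.smul_apply, smul_eq_mul, ← key p]
    rfl
  -- nonzero
  have hvne : v ≠ 0 := by
    intro h0
    have h1 : v ⟨0, by omega⟩ = 0 := by rw [h0]; rfl
    rw [hv' ⟨0, by omega⟩] at h1
    simp only [pow_zero, one_mul] at h1
    exact absurd h1 (Real.sqrt_pos.mpr (aa_pos d k 0)).ne'
  refine ⟨part1, hvne, ?_⟩
  -- largest eigenvalue
  have hvabs : ∀ j : Fin d, |v j| = Real.sqrt (aa d k j.1) := by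
    intro j
    rw [hv' j, abs_mul, abs_pow, abs_neg, abs_one, one_pow, one_mul,
      abs_of_nonneg (Real.sqrt_nonneg _)]
  have hvsign : ∀ j : Fin d, (-1:ℝ)^j.1 * v j = |v j| := by
    intro j
    rw [hv' j, ← mul_assoc, neg_one_sq_pow, one_mul, abs_mul, abs_pow, abs_neg, abs_one,
      one_pow, one_mul, abs_of_nonneg (Real.sqrt_nonneg _)]
  have Tsym : ∀ i j : Fin d, T j i = T i j := by
    intro i j
    rcases (by omega : j.1 = i.1 + 1 ∨ i.1 = j.1 + 1 ∨ i.1 = j.1 ∨ i.1+1 < j.1 ∨ j.1+1 < i.1)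
      with h | h | h | h | h
    · exact (hTsub i j h).2
    · exact ((hTsub j i h).2).symm
    · rw [Fin.ext h]
    · rw [(hTzero i j h).1, (hTzero i j h).2]
    · rw [(hTzero j i h).1, (hTzero j i h).2]
  have signEq : ∀ p j : Fin d, |T p j| * |v j| = (-1:ℝ)^p.1 * (T p j * v j) := by
    intro p j
    rcases (by omega : j.1 = p.1 ∨ j.1 + 1 = p.1 ∨ j.1 = p.1 + 1 ∨ j.1+1 < p.1 ∨ p.1+1 < j.1)
      with h | h | h | h | h
    · have hj : j = p := Fin.ext h
      subst hj
      have hT0 : 0 ≤ T j j := by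
        rw [hTdiag j]
        positivity
      rw [abs_of_nonneg hT0, ← hvsign j]
      ring
    · have hT := hTsub j p h.symm
      have hT0 : T p j ≤ 0 := by
        rw [hT.2, hT.1]
        exact div_nonpos_of_nonpos_of_nonneg (neg_nonpos.mpr (Real.sqrt_nonneg _)) hc.le
      rw [abs_of_nonpos hT0, ← hvsign j, ← h, pow_succ]
      ring
    · have hT := hTsub p j h
      have hT0 : T p j ≤ 0 := by
        rw [hT.1]
        exact div_nonpos_of_nonpos_of_nonneg (neg_nonpos.mpr (Real.sqrt_nonneg _)) hc.le
      rw [abs_of_nonpos hT0, ← hvsign j, h, pow_succ]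
      ring
    · rw [(hTzero j p h).2]; simp
    · rw [(hTzero p j h).1]; simp
  have keyAbs : ∀ p : Fin d, (∑ j, |T p j| * Real.sqrt (aa d k j.1))
      = lam * Real.sqrt (aa d k p.1) := by
    intro p
    calc (∑ j, |T p j| * Real.sqrt (aa d k j.1)) = ∑ j, |T p j| * |v j| := by
          simp_rw [hvabs]
      _ = ∑ j, (-1:ℝ)^p.1 * (T p j * v j) := by simp_rw [signEq]
      _ = (-1:ℝ)^p.1 * (lam * v p) := by rw [← Finset.mul_sum, key p]
      _ = lam * Real.sqrt (aa d k p.1) := by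
          rw [hv' p]
          linear_combination (lam * Real.sqrt (aa d k p.1)) * neg_one_sq_pow p.1
  intro μ hμ
  obtain ⟨x, hx⟩ := hμ.exists_hasEigenvector
  have hx0 : x ≠ 0 := hx.right
  have hxe : ∀ p : Fin d, (∑ j, T p j * x j) = μ * x p := by
    have h1 : Matrix.toLin' T x = μ • x := hx.apply_eq_smul
    rw [Matrix.toLin'_apply] at h1
    intro p
    have := congrFun h1 p
    simpa [Matrix.mulVec, dotProduct] using this
  set S : ℝ := ∑ j, Real.sqrt (aa d k j.1) * |x j| with hSdef
  have hSpos : 0 < S := by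
    obtain ⟨j0, hj0⟩ := Function.ne_iff.mp hx0
    apply Finset.sum_pos' (fun j _ => by positivity)
    exact ⟨j0, Finset.mem_univ _, by
      have : 0 < |x j0| := abs_pos.mpr hj0
      have h2 : 0 < Real.sqrt (aa d k j0.1) := Real.sqrt_pos.mpr (aa_pos d k j0.1)
      positivity⟩
  have hmain : |μ| * S ≤ lam * S := by
    have step1 : |μ| * S = ∑ j, Real.sqrt (aa d k j.1) * |μ * x j| := by
      rw [hSdef, Finset.mul_sum]
      congr 1; funext j
      rw [abs_mul]; ring
    have step2 : ∀ j : Fin d, Real.sqrt (aa d k j.1) * |μ * x j|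
        ≤ Real.sqrt (aa d k j.1) * ∑ i, |T j i| * |x i| := by
      intro j
      apply mul_le_mul_of_nonneg_left _ (Real.sqrt_nonneg _)
      rw [← hxe j]
      calc |∑ i, T j i * x i| ≤ ∑ i, |T j i * x i| := Finset.abs_sum_le_sum_abs _ _
        _ = ∑ i, |T j i| * |x i| := by simp_rw [abs_mul]
    have step3 : (∑ j, Real.sqrt (aa d k j.1) * ∑ i, |T j i| * |x i|) = lam * S := by
      calc (∑ j, Real.sqrt (aa d k j.1) * ∑ i, |T j i| * |x i|)
          = ∑ j, ∑ i, |T j i| * Real.sqrt (aa d k j.1) * |x i| := by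
            refine Finset.sum_congr rfl fun j _ => ?_
            rw [Finset.mul_sum]
            exact Finset.sum_congr rfl fun i _ => by ring
        _ = ∑ i, ∑ j, |T j i| * Real.sqrt (aa d k j.1) * |x i| := Finset.sum_comm
        _ = ∑ i, (∑ j, |T i j| * Real.sqrt (aa d k j.1)) * |x i| := by
            refine Finset.sum_congr rfl fun i _ => ?_
            rw [Finset.sum_mul]
            exact Finset.sum_congr rfl fun j _ => by rw [Tsym i j]
        _ = ∑ i, (lam * Real.sqrt (aa d k i.1)) * |x i| := by
            exact Finset.sum_congr rfl fun i _ => by rw [keyAbs i]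
        _ = lam * S := by
            rw [hSdef, Finset.mul_sum]
            exact Finset.sum_congr rfl fun i _ => by ring
    calc |μ| * S = ∑ j, Real.sqrt (aa d k j.1) * |μ * x j| := step1
      _ ≤ ∑ j, Real.sqrt (aa d k j.1) * ∑ i, |T j i| * |x i| :=
          Finset.sum_le_sum (fun j _ => step2 j)
      _ = lam * S := step3
  have : |μ| ≤ lam := le_of_mul_le_mul_right hmain hSpos
  exact (le_abs_self μ).trans this
end
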